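/- Let q, r, k be positive integers and B = q(r-1)+k. Suppose Y₁, Y₂ ∈ ℚ⟦X⟧ both have vanishing coefficients in all degrees strictly below q-1, have the same coefficient in degree q-1, and each satisfies the differential equation (1 - B·Y^{r-1}·X^{r-1+k}) · X · Y' = ((q-1) + (B·(r+k)/r)·Y^{r-1}·X^{r-1+k}) · Y in ℚ⟦X⟧ (Y' the formal derivative). Then Y₁ = Y₂. -/

import Mathlib

open PowerSeries

private lemma coeff_mul_congr {m : ℕ} {A₁ A₂ B₁ B₂ : PowerSeries ℚ}
    (hA : ∀ i ≤ m, PowerSeries.coeff i A₁ = PowerSeries.coeff i A₂)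
    (hB : ∀ i ≤ m, PowerSeries.coeff i B₁ = PowerSeries.coeff i B₂) :
    ∀ j ≤ m, PowerSeries.coeff j (A₁ * B₁) = PowerSeries.coeff j (A₂ * B₂) := by
  intro j hj
  rw [coeff_mul, coeff_mul]
  apply Finset.sum_congr rfl
  intro p hp
  rw [Finset.HasAntidiagonal.mem_antidiagonal] at hp
  rw [hA p.1 (by omega), hB p.2 (by omega)]

private lemma coeff_pow_congr {m : ℕ} {Y₁ Y₂ : PowerSeries ℚ}
    (hY : ∀ i ≤ m, PowerSeries.coeff i Y₁ = PowerSeries.coeff i Y₂) (e : ℕ) :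
    ∀ j ≤ m, PowerSeries.coeff j (Y₁ ^ e) = PowerSeries.coeff j (Y₂ ^ e) := by
  induction e with
  | zero => intro j _; simp
  | succ e ih =>
      intro j hj
      rw [pow_succ, pow_succ]
      exact coeff_mul_congr ih hY j hj

private lemma coeff_X_mul_derivative (Y : PowerSeries ℚ) (i : ℕ) :
    PowerSeries.coeff i (PowerSeries.X * PowerSeries.derivative ℚ Y) =
      (i : ℚ) * PowerSeries.coeff i Y := by
  cases i with
  | zero =>
      simp [PowerSeries.coeff_zero_eq_constantCoeff]
  | succ n =>
      rw [coeff_succ_X_mul, PowerSeries.coeff_derivative]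
      push_cast
      ring

private lemma key_congr {n s : ℕ} (hs : 1 ≤ s) (c : ℚ) (e : ℕ)
    {Y₁ Y₂ W₁ W₂ : PowerSeries ℚ}
    (hY : ∀ i < n, PowerSeries.coeff i Y₁ = PowerSeries.coeff i Y₂)
    (hW : ∀ i < n, PowerSeries.coeff i W₁ = PowerSeries.coeff i W₂) :
    PowerSeries.coeff n (PowerSeries.C c * Y₁ ^ e * PowerSeries.X ^ s * W₁) =
      PowerSeries.coeff n (PowerSeries.C c * Y₂ ^ e * PowerSeries.X ^ s * W₂) := by
  have h₁ : PowerSeries.C c * Y₁ ^ e * PowerSeries.X ^ s * W₁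
      = (PowerSeries.C c * (Y₁ ^ e * W₁)) * PowerSeries.X ^ s := by ring
  have h₂ : PowerSeries.C c * Y₂ ^ e * PowerSeries.X ^ s * W₂
      = (PowerSeries.C c * (Y₂ ^ e * W₂)) * PowerSeries.X ^ s := by ring
  rw [h₁, h₂, PowerSeries.coeff_mul_X_pow', PowerSeries.coeff_mul_X_pow']
  by_cases hsn : s ≤ n
  · rw [if_pos hsn, if_pos hsn, PowerSeries.coeff_C_mul, PowerSeries.coeff_C_mul]
    congr 1
    have hm : n - s < n := by omega
    exact coeff_mul_congr (m := n - s)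
      (coeff_pow_congr (fun i hi => hY i (lt_of_le_of_lt hi hm)) e)
      (fun i hi => hW i (lt_of_le_of_lt hi hm)) (n - s) le_rfl
  · rw [if_neg hsn, if_neg hsn]

/-- Let `q, r, k` be positive integers and `B = q(r-1)+k`.
If `Y₁, Y₂ ∈ ℚ⟦X⟧` both vanish in all degrees strictly below `q-1`, have the
same coefficient in degree `q-1`, and each satisfies the differential equation
`(1 - B·Y^{r-1}·X^{r-1+k}) · X · Y' = ((q-1) + (B·(r+k)/r)·Y^{r-1}·X^{r-1+k}) · Y`
(with `Y'` the formal derivative), then `Y₁ = Y₂`. -/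
theorem leaky_ODE_uniqueness
    (q r k : ℕ) (hq : 0 < q) (hr : 0 < r) (hk : 0 < k)
    (B : ℕ) (hB : B = q * (r - 1) + k)
    (Y₁ Y₂ : PowerSeries ℚ)
    (hlow₁ : ∀ n : ℕ, n < q - 1 → PowerSeries.coeff n Y₁ = 0)
    (hlow₂ : ∀ n : ℕ, n < q - 1 → PowerSeries.coeff n Y₂ = 0)
    (hsame : PowerSeries.coeff (q - 1) Y₁ = PowerSeries.coeff (q - 1) Y₂)
    (hODE₁ :
      (1 - PowerSeries.C (B : ℚ) * Y₁ ^ (r - 1) * PowerSeries.X ^ (r - 1 + k)) *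
          PowerSeries.X * PowerSeries.derivative ℚ Y₁ =
        (PowerSeries.C ((q : ℚ) - 1) +
            PowerSeries.C ((B : ℚ) * (r + k) / r) * Y₁ ^ (r - 1) *
              PowerSeries.X ^ (r - 1 + k)) * Y₁)
    (hODE₂ :
      (1 - PowerSeries.C (B : ℚ) * Y₂ ^ (r - 1) * PowerSeries.X ^ (r - 1 + k)) *
          PowerSeries.X * PowerSeries.derivative ℚ Y₂ =
        (PowerSeries.C ((q : ℚ) - 1) +
            PowerSeries.C ((B : ℚ) * (r + k) / r) * Y₂ ^ (r - 1) *
              PowerSeries.X ^ (r - 1 + k)) * Y₂) :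
    Y₁ = Y₂ := by
  ext n
  induction n using Nat.strong_induction_on with
  | _ n IH =>
  rcases lt_trichotomy n (q - 1) with hlt | heq | hgt
  · rw [hlow₁ n hlt, hlow₂ n hlt]
  · rw [heq, hsame]
  -- now n > q - 1, hence n ≥ q ≥ 1
  have hs : 1 ≤ r - 1 + k := by omega
  set s := r - 1 + k with hsdef
  -- extract the coefficient-n relation from an ODE
  have main : ∀ Y : PowerSeries ℚ,
      (1 - PowerSeries.C (B : ℚ) * Y ^ (r - 1) * PowerSeries.X ^ s) *
          PowerSeries.X * PowerSeries.derivative ℚ Y =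
        (PowerSeries.C ((q : ℚ) - 1) +
            PowerSeries.C ((B : ℚ) * (r + k) / r) * Y ^ (r - 1) *
              PowerSeries.X ^ s) * Y →
      ((n : ℚ) - ((q : ℚ) - 1)) * PowerSeries.coeff n Y =
        PowerSeries.coeff n
            (PowerSeries.C (B : ℚ) * Y ^ (r - 1) * PowerSeries.X ^ s *
              (PowerSeries.X * PowerSeries.derivative ℚ Y)) +
        PowerSeries.coeff n
            (PowerSeries.C ((B : ℚ) * (r + k) / r) * Y ^ (r - 1) *
              PowerSeries.X ^ s * Y) := by
    intro Y hODE
    have h1 : (1 - PowerSeries.C (B : ℚ) * Y ^ (r - 1) * PowerSeries.X ^ s) *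
          PowerSeries.X * PowerSeries.derivative ℚ Y =
        PowerSeries.X * PowerSeries.derivative ℚ Y -
          PowerSeries.C (B : ℚ) * Y ^ (r - 1) * PowerSeries.X ^ s *
            (PowerSeries.X * PowerSeries.derivative ℚ Y) := by ring
    have h2 : (PowerSeries.C ((q : ℚ) - 1) +
            PowerSeries.C ((B : ℚ) * (r + k) / r) * Y ^ (r - 1) *
              PowerSeries.X ^ s) * Y =
        PowerSeries.C ((q : ℚ) - 1) * Y +
          PowerSeries.C ((B : ℚ) * (r + k) / r) * Y ^ (r - 1) *
            PowerSeries.X ^ s * Y := by ring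
    rw [h1, h2] at hODE
    have := congrArg (PowerSeries.coeff n) hODE
    rw [map_sub, map_add, coeff_X_mul_derivative, PowerSeries.coeff_C_mul] at this
    linarith [this]
  have e₁ := main Y₁ hODE₁
  have e₂ := main Y₂ hODE₂
  have hIH : ∀ i < n, PowerSeries.coeff i Y₁ = PowerSeries.coeff i Y₂ := IH
  have hW : ∀ i < n,
      PowerSeries.coeff i (PowerSeries.X * PowerSeries.derivative ℚ Y₁) =
        PowerSeries.coeff i (PowerSeries.X * PowerSeries.derivative ℚ Y₂) := by
    intro i hi
    rw [coeff_X_mul_derivative, coeff_X_mul_derivative, hIH i hi]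
  have c1 := key_congr (n := n) hs ((B : ℚ)) (r - 1) hIH hW
  have c2 := key_congr (n := n) hs ((B : ℚ) * (r + k) / r) (r - 1) hIH hIH
  have hne : ((n : ℚ) - ((q : ℚ) - 1)) ≠ 0 := by
    have : (q : ℚ) ≤ (n : ℚ) := by exact_mod_cast (by omega : q ≤ n)
    intro h; linarith
  have : ((n : ℚ) - ((q : ℚ) - 1)) * PowerSeries.coeff n Y₁ =
      ((n : ℚ) - ((q : ℚ) - 1)) * PowerSeries.coeff n Y₂ := by
    rw [e₁, e₂, c1, c2]
  exact mul_left_cancel₀ hne this
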